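/- arXiv:1103.2038 — 2 statements merged into one kernel-verified Lean document; each statement's English description precedes it below -/
import Mathlib

section
/- Let H = H⁺ ⊕ H⁻ be an orthogonal decomposition of a Hilbert space, and let W ⊆ W' be closed subspaces of H such that the orthogonal projections pr₊ : W → H⁺ and pr₊ : W' → H⁺ are Fredholm, and dim(W'/W) = l is finite. Then ν(W') = ν(W) + l, where ν(V) = dim(ker(pr₊|_V)) − dim(coker(pr₊|_V)) is the virtual dimension. -/
open Module Submodule

noncomputable section

variable {H : Type*} [NormedAddCommGroup H] [InnerProductSpace ℂ H] [CompleteSpace H]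

def IsFredholm {E F : Type*} [NormedAddCommGroup E] [InnerProductSpace ℂ E]
    [NormedAddCommGroup F] [InnerProductSpace ℂ F] (T : E →L[ℂ] F) : Prop :=
  FiniteDimensional ℂ (LinearMap.ker (T : E →ₗ[ℂ] F)) ∧
  FiniteDimensional ℂ (F ⧸ LinearMap.range (T : E →ₗ[ℂ] F)) ∧
  IsClosed (LinearMap.range (T : E →ₗ[ℂ] F) : Set F)

/-- The orthogonal projection `pr₊ : W → H⁺` restricted to a subspace `W`. -/
def projPlus (Hp : Submodule ℂ H) [HasOrthogonalProjection Hp] (W : Submodule ℂ H) :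
    W →L[ℂ] Hp :=
  (orthogonalProjection Hp).comp W.subtypeL

/-- The virtual dimension `ν(W) = dim ker(pr₊|_W) − dim coker(pr₊|_W)`. -/
def vdim (Hp : Submodule ℂ H) [HasOrthogonalProjection Hp] (W : Submodule ℂ H) : ℤ :=
  (finrank ℂ (LinearMap.ker (projPlus Hp W : W →ₗ[ℂ] Hp)) : ℤ) -
    (finrank ℂ (Hp ⧸ LinearMap.range (projPlus Hp W : W →ₗ[ℂ] Hp)) : ℤ)

/-- If `W ⊆ W'` are closed subspaces whose projections to `H⁺` are Fredholm and
`dim (W'/W) = l`, then `ν(W') = ν(W) + l`. -/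
theorem vdim_of_le (Hp : Submodule ℂ H) [HasOrthogonalProjection Hp]
    (W W' : Submodule ℂ H) (hWc : IsClosed (W : Set H)) (hW'c : IsClosed (W' : Set H))
    (hle : W ≤ W')
    (hFW : IsFredholm (projPlus Hp W)) (hFW' : IsFredholm (projPlus Hp W'))
    (l : ℕ) (hfin : FiniteDimensional ℂ (↥W' ⧸ W.comap W'.subtype))
    (hl : finrank ℂ (↥W' ⧸ W.comap W'.subtype) = l) :
    vdim Hp W' = vdim Hp W + l := by
  classical
  set f' : ↥W' →ₗ[ℂ] Hp := (projPlus Hp W' : ↥W' →ₗ[ℂ] Hp) with hf'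
  set j : ↥W →ₗ[ℂ] ↥W' := Submodule.inclusion hle with hj
  have hcomp : (projPlus Hp W : ↥W →ₗ[ℂ] Hp) = f'.comp j := by ext x; rfl
  set V : Submodule ℂ ↥W' := W.comap W'.subtype with hV
  set K : Submodule ℂ ↥W' := LinearMap.ker f' with hK
  set A : Submodule ℂ Hp := LinearMap.range (f'.comp j) with hA
  set B : Submodule ℂ Hp := LinearMap.range f' with hB
  have hrange_j : LinearMap.range j = V := Submodule.range_inclusion _ _ _
  have hAmap : A = Submodule.map f' V := by rw [hA, LinearMap.range_comp, hrange_j]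
  have hAB : A ≤ B := by rw [hAmap, hB]; exact LinearMap.map_le_range
  -- identifications with the data appearing in `vdim`
  have hkerW' : LinearMap.ker (projPlus Hp W' : ↥W' →ₗ[ℂ] Hp) = K := rfl
  have hrangeW' : LinearMap.range (projPlus Hp W' : ↥W' →ₗ[ℂ] Hp) = B := rfl
  have hkerW : LinearMap.ker (projPlus Hp W : ↥W →ₗ[ℂ] Hp) = LinearMap.ker (f'.comp j) := by
    rw [← hcomp]
  have hrangeW : LinearMap.range (projPlus Hp W : ↥W →ₗ[ℂ] Hp) = A := by rw [hA, ← hcomp]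
  -- finiteness instances
  haveI finK : FiniteDimensional ℂ K := hFW'.1
  haveI finCokB : FiniteDimensional ℂ (Hp ⧸ B) := hFW'.2.1
  haveI finCokA : FiniteDimensional ℂ (Hp ⧸ A) := by
    have := hFW.2.1; rwa [hrangeW] at this
  haveI : FiniteDimensional ℂ (↥W' ⧸ V) := hfin
  -- the induced map on quotients
  have hVle : V ≤ Submodule.comap f' A := by
    intro x hx
    simp only [Submodule.mem_comap]
    rw [hAmap]
    exact Submodule.mem_map_of_mem hx
  set φ : (↥W' ⧸ V) →ₗ[ℂ] (Hp ⧸ A) := Submodule.mapQ V A f' hVle with hφ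
  -- kernel of φ
  have hkerφ : LinearMap.ker φ = Submodule.map V.mkQ K := by
    rw [hφ, Submodule.mapQ, Submodule.ker_liftQ, LinearMap.ker_comp, Submodule.ker_mkQ]
    have h1 : Submodule.comap f' A = V ⊔ K := by rw [hAmap, Submodule.comap_map_eq]
    rw [h1, Submodule.map_sup, Submodule.mkQ_map_self, bot_sup_eq]
  -- range of φ
  have hrangeφ : LinearMap.range φ = Submodule.map A.mkQ B := by
    rw [hφ, Submodule.mapQ, Submodule.range_liftQ, LinearMap.range_comp, ← hB]
  -- the restriction map χ : K → W'⧸V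
  set χ : ↥K →ₗ[ℂ] (↥W' ⧸ V) := V.mkQ.comp K.subtype with hχ
  have hkerχ : LinearMap.ker χ = Submodule.comap K.subtype V := by
    rw [hχ, LinearMap.ker_comp, Submodule.ker_mkQ]
  have hrangeχ : LinearMap.range χ = Submodule.map V.mkQ K := by
    rw [hχ, LinearMap.range_comp, Submodule.range_subtype]
  -- dim (ker (pr₊|W)) = dim (comap K.subtype V)
  have hkerdim : finrank ℂ (LinearMap.ker (projPlus Hp W : ↥W →ₗ[ℂ] Hp)) =
      finrank ℂ (Submodule.comap K.subtype V) := by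
    have hinj : Function.Injective j := Submodule.inclusion_injective hle
    have e1 : finrank ℂ (LinearMap.ker (f'.comp j)) = finrank ℂ (Submodule.map j
        (Submodule.comap j K)) := by
      have : LinearMap.ker (f'.comp j) = Submodule.comap j K := by
        rw [LinearMap.ker_comp]
      rw [this]
      exact (Submodule.equivMapOfInjective j hinj _).finrank_eq
    have e2 : Submodule.map j (Submodule.comap j K) = V ⊓ K := by
      rw [Submodule.map_comap_eq, hrange_j]
    have e3 : Submodule.comap K.subtype V = Submodule.comap K.subtype (V ⊓ K) := by
      ext x
      simp only [Submodule.mem_comap, Submodule.mem_inf]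
      exact ⟨fun h => ⟨h, x.2⟩, fun h => h.1⟩
    have e4 : finrank ℂ (Submodule.comap K.subtype (V ⊓ K)) = finrank ℂ (V ⊓ K : Submodule ℂ ↥W') :=
      (Submodule.comapSubtypeEquivOfLe inf_le_right).finrank_eq
    rw [hkerW, e1, e2, e3, e4]
  -- Equation (1): l = rk(φ) + nullity(φ)
  have eq1 : finrank ℂ (LinearMap.range φ) + finrank ℂ (LinearMap.ker φ) = l := by
    rw [← hl]; exact LinearMap.finrank_range_add_finrank_ker φ
  -- Equation (2): dim K = nullity(φ) + dim ker (pr₊|W)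
  have eq2 : finrank ℂ (LinearMap.ker φ) + finrank ℂ (LinearMap.ker (projPlus Hp W : ↥W →ₗ[ℂ] Hp)) =
      finrank ℂ K := by
    have := LinearMap.finrank_range_add_finrank_ker χ
    rw [hkerχ, hrangeχ, ← hkerφ] at this
    rw [hkerdim, this]
  -- Equation (3): dim coker A = dim coker B + rk(φ)
  have eq3 : finrank ℂ (Hp ⧸ B) + finrank ℂ (LinearMap.range φ) = finrank ℂ (Hp ⧸ A) := by
    have h1 := (Submodule.map A.mkQ B).finrank_quotient_add_finrank
    have h2 : finrank ℂ ((Hp ⧸ A) ⧸ Submodule.map A.mkQ B) = finrank ℂ (Hp ⧸ B) :=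
      (Submodule.quotientQuotientEquivQuotient A B hAB).finrank_eq
    rw [hrangeφ, ← h2, h1]
  -- conclude
  rw [vdim, vdim, hkerW', hrangeW', hrangeW]
  omega
end
end

section
/- Let V ≅ Kⁿ and let F₁, F₂ be two complete flags in V. Then there exists a frame, i.e., a set of n one-dimensional subspaces U₁, …, Uₙ spanning V, such that every subspace of F₁ and every subspace of F₂ is a span of a subset of {U₁, …, Uₙ}. -/
open Module

/-- Any two complete flags in an `n`-dimensional space admit a common frame:
`n` lines spanning `V` such that every member of either flag is the span of a
subset of the lines. -/
theorem complete_flags_common_frame {K V : Type*} [Field K] [AddCommGroup V]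
    [Module K V] [FiniteDimensional K V]
    (n : ℕ) (hn : finrank K V = n)
    (f₁ f₂ : Fin (n + 1) → Submodule K V)
    (hmono₁ : StrictMono f₁) (hmono₂ : StrictMono f₂)
    (hdim₁ : ∀ i, finrank K (f₁ i) = i) (hdim₂ : ∀ i, finrank K (f₂ i) = i) :
    ∃ U : Fin n → Submodule K V,
      (∀ j, finrank K (U j) = 1) ∧ (⨆ j, U j) = ⊤ ∧
      (∀ i, ∃ s : Finset (Fin n), f₁ i = s.sup U) ∧
      (∀ i, ∃ s : Finset (Fin n), f₂ i = s.sup U) := by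
  classical
  have hbot₁ : f₁ 0 = ⊥ := Submodule.finrank_eq_zero.mp (by simpa using hdim₁ 0)
  have hbot₂ : f₂ 0 = ⊥ := Submodule.finrank_eq_zero.mp (by simpa using hdim₂ 0)
  have htop₁ : f₁ (Fin.last n) = ⊤ :=
    Submodule.eq_top_of_finrank_eq (by rw [hdim₁]; simp [hn])
  have htop₂ : f₂ (Fin.last n) = ⊤ :=
    Submodule.eq_top_of_finrank_eq (by rw [hdim₂]; simp [hn])
  have hPne : ∀ k : Fin n,
      (Finset.univ.filter fun j => f₁ k.succ ≤ f₁ k.castSucc ⊔ f₂ j).Nonempty :=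
    fun k => ⟨Fin.last n, by simp [htop₂]⟩
  set g : Fin n → Fin (n + 1) := fun k =>
    (Finset.univ.filter fun j => f₁ k.succ ≤ f₁ k.castSucc ⊔ f₂ j).min' (hPne k) with hg
  have hgP : ∀ k, f₁ k.succ ≤ f₁ k.castSucc ⊔ f₂ (g k) := by
    intro k
    have := Finset.min'_mem _ (hPne k)
    simpa [hg] using this
  have hgmin : ∀ k j, f₁ k.succ ≤ f₁ k.castSucc ⊔ f₂ j → g k ≤ j := by
    intro k j hj
    exact Finset.min'_le _ _ (by simpa using hj)
  have hg0 : ∀ k, g k ≠ 0 := by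
    intro k h
    have h2 := hgP k
    rw [h, hbot₂, sup_bot_eq] at h2
    exact absurd h2 (hmono₁ (@Fin.castSucc_lt_succ _ k)).not_ge
  have hg0' : ∀ k, (g k : ℕ) ≠ 0 := by
    intro k h
    exact hg0 k (Fin.ext (by simp [h]))
  -- choose the frame vectors
  have hv : ∀ k : Fin n, ∃ w : V, w ∈ f₁ k.succ ⊓ f₂ (g k) ∧ w ∉ f₁ k.castSucc := by
    intro k
    by_contra h
    push_neg at h
    have hle : f₁ k.succ ⊓ f₂ (g k) ≤ f₁ k.castSucc := fun x hx => h x hx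
    have hcs : f₁ k.succ ≤ f₁ k.castSucc := by
      have hmod : (f₁ k.castSucc ⊔ f₂ (g k)) ⊓ f₁ k.succ
          = f₁ k.castSucc ⊔ f₂ (g k) ⊓ f₁ k.succ :=
        sup_inf_assoc_of_le _ (hmono₁ (@Fin.castSucc_lt_succ _ k)).le
      calc f₁ k.succ = (f₁ k.castSucc ⊔ f₂ (g k)) ⊓ f₁ k.succ :=
            (inf_eq_right.mpr (hgP k)).symm
        _ = f₁ k.castSucc ⊔ f₂ (g k) ⊓ f₁ k.succ := hmod
        _ ≤ f₁ k.castSucc := sup_le le_rfl (by rw [inf_comm]; exact hle)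
    exact absurd hcs (hmono₁ (@Fin.castSucc_lt_succ _ k)).not_ge
  choose v hv₁ hv₂ using hv
  set U : Fin n → Submodule K V := fun k => K ∙ v k with hU
  have hvmem₁ : ∀ k, v k ∈ f₁ k.succ := fun k => (hv₁ k).1
  have hvmem₂ : ∀ k, v k ∈ f₂ (g k) := fun k => (hv₁ k).2
  have hUrank : ∀ k, finrank K (U k) = 1 := by
    intro k
    apply finrank_span_singleton
    intro h
    exact hv₂ k (h ▸ (f₁ k.castSucc).zero_mem)
  have hU₁ : ∀ k, U k ≤ f₁ k.succ := fun k =>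
    (Submodule.span_singleton_le_iff_mem _ _).mpr (hvmem₁ k)
  have hU₂ : ∀ k, U k ≤ f₂ (g k) := fun k =>
    (Submodule.span_singleton_le_iff_mem _ _).mpr (hvmem₂ k)
  have hvU : ∀ k, v k ∈ U k := fun k => Submodule.mem_span_singleton_self _
  -- the key step for flag 1
  have key₁ : ∀ k : Fin n, f₁ k.succ = f₁ k.castSucc ⊔ U k := by
    intro k
    have hle : f₁ k.castSucc ⊔ U k ≤ f₁ k.succ :=
      sup_le (hmono₁ (@Fin.castSucc_lt_succ _ k)).le (hU₁ k)
    refine (Submodule.eq_of_le_of_finrank_le hle ?_).symm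
    have hlt : f₁ k.castSucc < f₁ k.castSucc ⊔ U k := by
      refine lt_of_le_of_ne le_sup_left ?_
      intro h
      exact hv₂ k (h ▸ (le_sup_right : U k ≤ _) (hvU k))
    have h2 := Submodule.finrank_lt_finrank_of_lt hlt
    rw [hdim₁] at h2 ⊢
    simp only [Fin.val_succ, Fin.coe_castSucc] at h2 ⊢
    omega
  -- the key step for flag 2
  have key₂ : ∀ (k : Fin n) (j : Fin (n + 1)), (j : ℕ) + 1 = (g k : ℕ) →
      f₂ (g k) = f₂ j ⊔ U k := by
    intro k j hj
    have hjlt : j < g k := by rw [Fin.lt_def]; omega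
    have hvnot : v k ∉ f₂ j := by
      intro hmem
      have hle : f₁ k.succ ≤ f₁ k.castSucc ⊔ f₂ j := by
        rw [key₁ k]
        exact sup_le le_sup_left
          (le_sup_right.trans' ((Submodule.span_singleton_le_iff_mem _ _).mpr hmem))
      exact absurd (hgmin k j hle) hjlt.not_ge
    have hle : f₂ j ⊔ U k ≤ f₂ (g k) :=
      sup_le (hmono₂ hjlt).le (hU₂ k)
    refine (Submodule.eq_of_le_of_finrank_le hle ?_).symm
    have hlt : f₂ j < f₂ j ⊔ U k := by
      refine lt_of_le_of_ne le_sup_left ?_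
      intro h
      exact hvnot (h ▸ (le_sup_right : U k ≤ _) (hvU k))
    have h2 := Submodule.finrank_lt_finrank_of_lt hlt
    rw [hdim₂] at h2 ⊢
    omega
  -- g is injective
  have hnelt : ∀ k k' : Fin n, k < k' → g k ≠ g k' := by
    intro k k' hkk' heq
    have h1 : 1 ≤ (g k' : ℕ) := Nat.one_le_iff_ne_zero.mpr (hg0' k')
    have hlt : (g k' : ℕ) - 1 < n + 1 := by have := (g k').isLt; omega
    set j1 : Fin (n + 1) := ⟨(g k' : ℕ) - 1, hlt⟩ with hj1
    have hj1v : (j1 : ℕ) + 1 = (g k : ℕ) := by rw [heq]; simp [hj1]; omega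
    have hsplit := key₂ k j1 hj1v
    have hUle : U k ≤ f₁ k'.castSucc := by
      refine (hU₁ k).trans (hmono₁.monotone ?_)
      rw [Fin.le_def]
      simp only [Fin.val_succ, Fin.coe_castSucc]
      exact hkk'
    have hle : f₁ k'.succ ≤ f₁ k'.castSucc ⊔ f₂ j1 := by
      rw [key₁ k']
      refine sup_le le_sup_left ((hU₂ k').trans ?_)
      rw [← heq, hsplit]
      exact sup_le le_sup_right (hUle.trans le_sup_left)
    have := hgmin k' j1 hle
    rw [Fin.le_def] at this
    simp [hj1] at this
    omega
  have ginj : Function.Injective g := by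
    intro k k' h
    rcases lt_trichotomy k k' with hlt | heq | hlt
    · exact absurd h (hnelt _ _ hlt)
    · exact heq
    · exact absurd h.symm (hnelt _ _ hlt)
  -- g is surjective onto the nonzero indices
  have gsurj : ∀ j : Fin (n + 1), j ≠ 0 → ∃ k, g k = j := by
    intro j hj
    have hj' : (j : ℕ) ≠ 0 := fun h => hj (Fin.ext (by simp [h]))
    set g' : Fin n → Fin n := fun k =>
      ⟨(g k : ℕ) - 1, by have := (g k).isLt; have := hg0' k; omega⟩ with hg'
    have hg'inj : Function.Injective g' := by
      intro k k' h
      apply ginj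
      have h2 := congrArg Fin.val h
      simp only [hg'] at h2
      have := hg0' k; have := hg0' k'
      exact Fin.ext (by omega)
    have hg'surj := (Finite.injective_iff_bijective.mp hg'inj).2
    obtain ⟨k, hk⟩ := hg'surj ⟨(j : ℕ) - 1, by have := j.isLt; omega⟩
    refine ⟨k, ?_⟩
    have h2 := congrArg Fin.val hk
    simp only [hg'] at h2
    have := hg0' k
    exact Fin.ext (by omega)
  -- representation of flag 1
  have rep₁ : ∀ i : Fin (n + 1),
      f₁ i = (Finset.univ.filter fun k : Fin n => (k : ℕ) < (i : ℕ)).sup U := by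
    intro i
    induction i using Fin.induction with
    | zero => simp [hbot₁]
    | succ i ih =>
      have hins : (Finset.univ.filter fun k : Fin n => (k : ℕ) < (i.succ : ℕ))
          = insert i (Finset.univ.filter fun k : Fin n => (k : ℕ) < (i.castSucc : ℕ)) := by
        ext k
        simp only [Finset.mem_insert, Finset.mem_filter, Finset.mem_univ, true_and,
          Fin.val_succ, Fin.coe_castSucc, Fin.ext_iff]
        omega
      rw [hins, Finset.sup_insert, key₁ i, ih, sup_comm]
  -- representation of flag 2
  have rep₂ : ∀ i : Fin (n + 1),
      f₂ i = (Finset.univ.filter fun k : Fin n => g k ≤ i).sup U := by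
    intro i
    induction i using Fin.induction with
    | zero =>
      have he : (Finset.univ.filter fun k : Fin n => g k ≤ 0) = ∅ := by
        ext k
        simp [Fin.le_zero_iff, hg0 k]
      rw [hbot₂, he, Finset.sup_empty]
    | succ i ih =>
      obtain ⟨k, hk⟩ := gsurj i.succ (Fin.succ_ne_zero i)
      have hins : (Finset.univ.filter fun k' : Fin n => g k' ≤ i.succ)
          = insert k (Finset.univ.filter fun k' : Fin n => g k' ≤ i.castSucc) := by
        ext k'
        simp only [Finset.mem_insert, Finset.mem_filter, Finset.mem_univ, true_and]
        constructor
        · intro h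
          rcases eq_or_lt_of_le h with h | h
          · exact Or.inl (ginj (h.trans hk.symm))
          · refine Or.inr ?_
            rw [Fin.le_def]
            rw [Fin.lt_def] at h
            simp only [Fin.val_succ] at h
            simp only [Fin.coe_castSucc]
            omega
        · rintro (rfl | h)
          · exact le_of_eq hk
          · refine h.trans ?_
            rw [Fin.le_def]
            simp
      have hstep : f₂ i.succ = f₂ i.castSucc ⊔ U k := by
        have h2 := key₂ k i.castSucc (by rw [hk]; simp)
        rw [hk] at h2
        exact h2
      rw [hins, Finset.sup_insert, hstep, ih, sup_comm]
  refine ⟨U, hUrank, ?_, fun i => ⟨_, rep₁ i⟩, fun i => ⟨_, rep₂ i⟩⟩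
  have huniv : (Finset.univ.filter fun k : Fin n => (k : ℕ) < ((Fin.last n : Fin (n + 1)) : ℕ))
      = Finset.univ := by
    ext k
    simp [k.isLt]
  rw [← Finset.sup_univ_eq_iSup, ← huniv, ← rep₁ (Fin.last n), htop₁]
end
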